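/- Let Π and Ξ be two mutually unbiased orthonormal bases of a d-dimensional Hilbert space. Then the functional W_u(ρ) = H(Δ_Ξ(ρ)) − log₂ d is a coherence witness with respect to Π: (i) W_u(σ) = 0 for every state σ that is diagonal in the basis Π, and (ii) there exists a state ρ (namely any element of Ξ) with W_u(ρ) = −log₂ d < 0. -/

import Mathlib

open scoped BigOperators
open Real

/-- entropy (base 2) of the state dephased in the orthonormal basis `v`,
i.e. the Shannon entropy of the outcome probabilities `⟨v i|ρ|v i⟩`.
(The dephased state `Δ_Ξ(ρ) = Σ_i |v i⟩⟨v i| ρ |v i⟩⟨v i|` is diagonal in the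
basis `v` with these diagonal entries, so this is its von Neumann entropy.) -/
noncomputable def dephasedEntropy {d : ℕ} (v : Fin d → Fin d → ℂ)
    (ρ : Matrix (Fin d) (Fin d) ℂ) : ℝ :=
  -∑ i, (dotProduct (star (v i)) (ρ.mulVec (v i))).re *
      Real.logb 2 (dotProduct (star (v i)) (ρ.mulVec (v i))).re

/-- a family of vectors is an orthonormal basis -/
def IsONB {d : ℕ} (v : Fin d → Fin d → ℂ) : Prop :=
  ∀ i j, dotProduct (star (v i)) (v j) = if i = j then 1 else 0

/-- two bases are mutually unbiased -/
def IsMUB {d : ℕ} (v w : Fin d → Fin d → ℂ) : Prop :=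
  ∀ i j, ‖dotProduct (star (v i)) (w j)‖ ^ 2 = 1 / d

lemma vecMulVec_mulVec' {d : ℕ} (a b x : Fin d → ℂ) :
    (Matrix.vecMulVec a b).mulVec x = (dotProduct b x) • a := by
  funext i
  simp [Matrix.mulVec, Matrix.vecMulVec, dotProduct, Finset.mul_sum, mul_comm,
    mul_left_comm]

lemma sum_mulVec' {d : ℕ} (M : Fin d → Matrix (Fin d) (Fin d) ℂ) (v : Fin d → ℂ) :
    (∑ i, M i).mulVec v = ∑ i, (M i).mulVec v := by
  funext j
  simp [Matrix.mulVec, dotProduct, Finset.sum_mul, Finset.sum_apply, Matrix.sum_apply]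
  rw [Finset.sum_comm]

lemma dotProduct_sum' {d : ℕ} (c : Fin d → ℂ) (f : Fin d → Fin d → ℂ) :
    dotProduct c (∑ i, f i) = ∑ i, dotProduct c (f i) := by
  simp [dotProduct, Finset.mul_sum, Finset.sum_apply]
  rw [Finset.sum_comm]

lemma inner_key {d : ℕ} (a c : Fin d → ℂ) :
    dotProduct (star c) ((Matrix.vecMulVec a (star a)).mulVec c)
      = (‖dotProduct (star a) c‖ ^ 2 : ℝ) := by
  rw [vecMulVec_mulVec', dotProduct_smul]
  have h1 : dotProduct (star c) a = starRingEnd ℂ (dotProduct (star a) c) := by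
    simp [dotProduct, map_sum, mul_comm]
  rw [h1, smul_eq_mul, Complex.mul_conj]
  norm_cast
  rw [Complex.sq_norm]

/-- for mutually unbiased orthonormal bases `Π` and `Ξ` of a
`d`-dimensional space (`d ≥ 2`), `W_u(ρ) = H(Δ_Ξ(ρ)) - log₂ d` is a coherence
witness w.r.t. `Π`: it vanishes on every state diagonal in `Π`, and takes the
value `-log₂ d < 0` on every basis state of `Ξ`. -/
theorem stmt1 {d : ℕ} (hd : 2 ≤ d) (Pi Ξ : Fin d → Fin d → ℂ)
    (hPi : IsONB Pi) (hΞ : IsONB Ξ) (hMUB : IsMUB Pi Ξ) :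
    (∀ p : Fin d → ℝ, (∀ i, 0 ≤ p i) → ∑ i, p i = 1 →
      dephasedEntropy Ξ (∑ i, ((p i : ℂ) • Matrix.vecMulVec (Pi i) (star (Pi i))))
        - Real.logb 2 d = 0) ∧
    (∀ j : Fin d,
      dephasedEntropy Ξ (Matrix.vecMulVec (Ξ j) (star (Ξ j))) - Real.logb 2 d
        = -Real.logb 2 d ∧ -Real.logb 2 d < 0) := by
  have hd0 : (d : ℝ) ≠ 0 := by positivity
  have hd1 : (1 : ℝ) < d := by exact_mod_cast hd.trans_lt' one_lt_two
  constructor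
  · intro p hp hsum
    have hq : ∀ k : Fin d,
        dotProduct (star (Ξ k))
          ((∑ i, ((p i : ℂ) • Matrix.vecMulVec (Pi i) (star (Pi i)))).mulVec (Ξ k))
          = ((1 / d : ℝ) : ℂ) := by
      intro k
      rw [sum_mulVec', dotProduct_sum']
      have : ∀ i, dotProduct (star (Ξ k))
          (((p i : ℂ) • Matrix.vecMulVec (Pi i) (star (Pi i))).mulVec (Ξ k))
          = ((p i / d : ℝ) : ℂ) := by
        intro i
        rw [Matrix.smul_mulVec, dotProduct_smul, inner_key, hMUB i k,
          smul_eq_mul]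
        push_cast
        ring
      rw [Finset.sum_congr rfl fun i _ => this i, ← Complex.ofReal_sum,
        ← Finset.sum_div, hsum]
    have hre : ∀ k : Fin d,
        (dotProduct (star (Ξ k))
          ((∑ i, ((p i : ℂ) • Matrix.vecMulVec (Pi i) (star (Pi i)))).mulVec (Ξ k))).re
          = 1 / d := by intro k; rw [hq k]; simp
    unfold dephasedEntropy
    simp only [hre]
    rw [Finset.sum_const, Finset.card_univ, Fintype.card_fin]
    rw [one_div, Real.logb_inv]
    rw [nsmul_eq_mul]
    field_simp
    ring
  · intro j
    have hq : ∀ k : Fin d,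
        (dotProduct (star (Ξ k))
          ((Matrix.vecMulVec (Ξ j) (star (Ξ j))).mulVec (Ξ k))).re
          = if k = j then 1 else 0 := by
      intro k
      rw [vecMulVec_mulVec', dotProduct_smul, smul_eq_mul, hΞ j k, hΞ k j]
      by_cases h : k = j <;> simp [h, eq_comm]
    unfold dephasedEntropy
    simp only [hq]
    have : ∀ k : Fin d, (if k = j then (1:ℝ) else 0) *
        Real.logb 2 (if k = j then (1:ℝ) else 0) = 0 := by
      intro k; by_cases h : k = j <;> simp [h]
    rw [Finset.sum_congr rfl fun k _ => this k]
    simp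
    exact Real.logb_pos one_lt_two hd1
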